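/- Let q ≥ 1. The map B carries the frontier of the open unit cube into the frontier of the invertible region: B(∂D_ζ) ⊆ ∂D_θ. -/

import Mathlib

/-- Forward recursion for the Barndorff-Nielsen–Schou / Monahan transformation:
`fwdRow ζ k i = θ_{i,k}` (1-based), with `θ_{k,k} = ζ_k` and
`θ_{i,k} = θ_{i,k-1} - ζ_k * θ_{k-i,k-1}` for `1 ≤ i ≤ k-1`. -/
noncomputable def fwdRow (ζ : ℕ → ℝ) : ℕ → ℕ → ℝ
  | 0 => fun _ => 0
  | (k+1) => fun i =>
      if i = k + 1 then ζ (k + 1)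
      else fwdRow ζ k i - ζ (k + 1) * fwdRow ζ k (k + 1 - i)

open Classical in
/-- Reverse recursion: `(invAux q θ d).1` is row `q - d` (i.e. `θ_{·, q-d}`), and
`(invAux q θ d).2` is the proposition that `|θ_{j,j}| < 1` for all `j` with `q - d ≤ j ≤ q`.
Row `q-(d+1)` is given by `θ_{i,k-1} = (θ_{i,k} + θ_{k,k} θ_{k-i,k})/(1-θ_{k,k}^2)` with
`k = q - d` when the diagonal condition holds at all levels `≥ k`, and is `0` otherwise. -/
noncomputable def invAux (q : ℕ) (θ : ℕ → ℝ) : ℕ → (ℕ → ℝ) × Prop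
  | 0 => (θ, |θ q| < 1)
  | (d+1) =>
      let p := invAux q θ d
      let row : ℕ → ℝ := fun i =>
        if p.2 then (p.1 i + p.1 (q - d) * p.1 (q - d - i)) / (1 - (p.1 (q - d)) ^ 2)
        else 0
      (row, p.2 ∧ |row (q - d - 1)| < 1)

/-- Interpret a vector in `ℝ^q` as a 1-based sequence `ℕ → ℝ` (value `0` out of range). -/
def toSeq {q : ℕ} (v : Fin q → ℝ) : ℕ → ℝ :=
  fun n => if h : n - 1 < q then v ⟨n - 1, h⟩ else 0

/-- The map `B : ℝ^q → ℝ^q`, `B(ζ)_i = θ_{i,q}`. -/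
noncomputable def Bmap {q : ℕ} (ζ : Fin q → ℝ) : Fin q → ℝ :=
  fun i => fwdRow (toSeq ζ) q (i.1 + 1)

/-- The map `B⁻ : ℝ^q → ℝ^q`, `B⁻(θ)_i = θ_{i,i}` computed by the reverse recursion. -/
noncomputable def Binv {q : ℕ} (θ : Fin q → ℝ) : Fin q → ℝ :=
  fun i => (invAux q (toSeq θ) (q - (i.1 + 1))).1 (i.1 + 1)

/-- The invertible region `D_θ ⊆ ℝ^q`: all complex roots of
`θ(z) = 1 - θ_1 z - ⋯ - θ_q z^q` satisfy `|z| > 1`. -/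
def invRegion (q : ℕ) : Set (Fin q → ℝ) :=
  {θ | ∀ z : ℂ, 1 - ∑ i : Fin q, (θ i : ℂ) * z ^ (i.1 + 1) = 0 → 1 < ‖z‖}

/-- The open unit cube `D_ζ = (-1,1)^q ⊆ ℝ^q`. -/
def openCube (q : ℕ) : Set (Fin q → ℝ) :=
  {ζ | ∀ i, ζ i ∈ Set.Ioo (-1 : ℝ) 1}

noncomputable def thetaFun (ζ : ℕ → ℝ) (k : ℕ) (z : ℂ) : ℂ :=
  1 - ∑ i ∈ Finset.range k, (fwdRow ζ k (i+1) : ℂ) * z ^ (i+1)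

noncomputable def tildeFun (ζ : ℕ → ℝ) (k : ℕ) (z : ℂ) : ℂ :=
  z ^ k - ∑ i ∈ Finset.range k, (fwdRow ζ k (i+1) : ℂ) * z ^ (k - 1 - i)

lemma thetaFun_zero (ζ : ℕ → ℝ) (z : ℂ) : thetaFun ζ 0 z = 1 := by
  simp [thetaFun]

lemma tildeFun_zero (ζ : ℕ → ℝ) (z : ℂ) : tildeFun ζ 0 z = 1 := by
  simp [tildeFun]

lemma fwdRow_succ_last (ζ : ℕ → ℝ) (k : ℕ) : fwdRow ζ (k+1) (k+1) = ζ (k+1) := by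
  simp [fwdRow]

lemma fwdRow_succ_lt (ζ : ℕ → ℝ) (k i : ℕ) (h : i < k) :
    fwdRow ζ (k+1) (i+1) = fwdRow ζ k (i+1) - ζ (k+1) * fwdRow ζ k (k - i) := by
  have h1 : i + 1 ≠ k + 1 := by omega
  have h2 : k + 1 - (i + 1) = k - i := by omega
  simp [fwdRow, h1, h2, show i ≠ k by omega]

lemma z_mul_tilde (ζ : ℕ → ℝ) (k : ℕ) (z : ℂ) :
    z * tildeFun ζ k z
      = z ^ (k+1) - ∑ i ∈ Finset.range k, (fwdRow ζ k (i+1) : ℂ) * z ^ (k - i) := by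
  unfold tildeFun
  rw [mul_sub, Finset.mul_sum]
  congr 1
  · rw [← pow_succ']
  · refine Finset.sum_congr rfl fun i hi => ?_
    have hik : i < k := Finset.mem_range.mp hi
    rw [show k - i = k - 1 - i + 1 by omega, pow_succ]
    ring

lemma reflect_sum (ζ : ℕ → ℝ) (k : ℕ) (z : ℂ) :
    ∑ i ∈ Finset.range k, (fwdRow ζ k (k - i) : ℂ) * z ^ (i+1)
      = ∑ i ∈ Finset.range k, (fwdRow ζ k (i+1) : ℂ) * z ^ (k - i) := by
  rw [← Finset.sum_range_reflect (fun i => (fwdRow ζ k (i+1) : ℂ) * z ^ (k - i)) k]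
  refine Finset.sum_congr rfl fun i hi => ?_
  have hik : i < k := Finset.mem_range.mp hi
  rw [show k - 1 - i + 1 = k - i by omega, show k - (k - 1 - i) = i + 1 by omega]

lemma thetaFun_succ (ζ : ℕ → ℝ) (k : ℕ) (z : ℂ) :
    thetaFun ζ (k+1) z = thetaFun ζ k z - (ζ (k+1) : ℂ) * (z * tildeFun ζ k z) := by
  have h1 : ∑ i ∈ Finset.range (k+1), (fwdRow ζ (k+1) (i+1) : ℂ) * z ^ (i+1)
      = (∑ i ∈ Finset.range k, (fwdRow ζ k (i+1) : ℂ) * z ^ (i+1))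
        - (ζ (k+1) : ℂ) * ∑ i ∈ Finset.range k, (fwdRow ζ k (k - i) : ℂ) * z ^ (i+1)
        + (ζ (k+1) : ℂ) * z ^ (k+1) := by
    rw [Finset.sum_range_succ, fwdRow_succ_last]
    congr 1
    rw [Finset.mul_sum, ← Finset.sum_sub_distrib]
    refine Finset.sum_congr rfl fun i hi => ?_
    rw [fwdRow_succ_lt ζ k i (Finset.mem_range.mp hi)]
    push_cast
    ring
  unfold thetaFun
  rw [h1, reflect_sum, z_mul_tilde]
  ring

lemma tildeFun_succ (ζ : ℕ → ℝ) (k : ℕ) (z : ℂ) :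
    tildeFun ζ (k+1) z = z * tildeFun ζ k z - (ζ (k+1) : ℂ) * thetaFun ζ k z := by
  have h1 : ∑ i ∈ Finset.range (k+1), (fwdRow ζ (k+1) (i+1) : ℂ) * z ^ (k + 1 - 1 - i)
      = (∑ i ∈ Finset.range k, (fwdRow ζ k (i+1) : ℂ) * z ^ (k - i))
        - (ζ (k+1) : ℂ) * ∑ i ∈ Finset.range k, (fwdRow ζ k (k - i) : ℂ) * z ^ (k - i)
        + (ζ (k+1) : ℂ) := by
    rw [Finset.sum_range_succ, fwdRow_succ_last]
    have : z ^ (k + 1 - 1 - k) = 1 := by norm_num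
    rw [this, mul_one]
    congr 1
    rw [Finset.mul_sum, ← Finset.sum_sub_distrib]
    refine Finset.sum_congr rfl fun i hi => ?_
    have hik : i < k := Finset.mem_range.mp hi
    rw [fwdRow_succ_lt ζ k i hik, show k + 1 - 1 - i = k - i from rfl]
    push_cast
    ring
  have h2 : ∑ i ∈ Finset.range k, (fwdRow ζ k (k - i) : ℂ) * z ^ (k - i)
      = ∑ i ∈ Finset.range k, (fwdRow ζ k (i+1) : ℂ) * z ^ (i+1) := by
    rw [← Finset.sum_range_reflect (fun i => (fwdRow ζ k (i+1) : ℂ) * z ^ (i+1)) k]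
    refine Finset.sum_congr rfl fun i hi => ?_
    have hik : i < k := Finset.mem_range.mp hi
    rw [show k - 1 - i + 1 = k - i by omega]
  rw [z_mul_tilde]
  unfold tildeFun thetaFun
  rw [h1, h2]
  ring

/-- Key Möbius-type inequality. -/
lemma mobius_ineq (c : ℝ) (hc : c^2 ≤ 1) (A B : ℂ)
    (h : ‖B‖ ≤ ‖A‖) :
    ‖B - (c : ℂ) * A‖ ≤ ‖A - (c : ℂ) * B‖ := by
  have hid : Complex.normSq (A - (c:ℂ) * B) - Complex.normSq (B - (c:ℂ) * A)
      = (1 - c^2) * (Complex.normSq A - Complex.normSq B) := by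
    simp [Complex.normSq_apply, Complex.sub_re, Complex.sub_im, Complex.mul_re,
      Complex.mul_im, Complex.ofReal_re, Complex.ofReal_im]
    ring
  have hAB : Complex.normSq B ≤ Complex.normSq A := by
    have := Complex.sq_norm A; have := Complex.sq_norm B
    nlinarith [norm_nonneg A, norm_nonneg B]
  have hle : Complex.normSq (B - (c:ℂ) * A) ≤ Complex.normSq (A - (c:ℂ) * B) := by
    nlinarith
  calc ‖B - (c:ℂ) * A‖ = Real.sqrt (Complex.normSq (B - (c:ℂ)*A)) := by
        rw [Complex.norm_def]
    _ ≤ Real.sqrt (Complex.normSq (A - (c:ℂ)*B)) := Real.sqrt_le_sqrt hle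
    _ = ‖A - (c:ℂ)*B‖ := by rw [Complex.norm_def]

/-- Schur–Cohn induction. -/
lemma schur (ζ : ℕ → ℝ) : ∀ k : ℕ, (∀ i, 1 ≤ i → i ≤ k → |ζ i| < 1) →
    ∀ z : ℂ, ‖z‖ ≤ 1 →
      ‖tildeFun ζ k z‖ ≤ ‖thetaFun ζ k z‖ ∧ thetaFun ζ k z ≠ 0 := by
  intro k
  induction k with
  | zero => intro _ z _; simp [thetaFun_zero, tildeFun_zero]
  | succ k ih =>
    intro hζ z hz
    obtain ⟨hle, hne⟩ := ih (fun i h1 h2 => hζ i h1 (by omega)) z hz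
    set A := thetaFun ζ k z with hA
    set T := tildeFun ζ k z with hT
    set c := ζ (k+1) with hc
    have hc1 : |c| < 1 := hζ (k+1) (by omega) le_rfl
    have hzT : ‖z * T‖ ≤ ‖A‖ := by
      rw [norm_mul]
      calc ‖z‖ * ‖T‖ ≤ 1 * ‖A‖ := by
            apply mul_le_mul hz hle (norm_nonneg T) zero_le_one
      _ = ‖A‖ := one_mul _
    have habsA : 0 < ‖A‖ := by
      simpa [norm_pos_iff] using hne
    have hne' : thetaFun ζ (k+1) z ≠ 0 := by
      rw [thetaFun_succ]
      intro h0
      have : ‖A‖ = ‖(c:ℂ) * (z * T)‖ := by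
        have : A = (c:ℂ) * (z * T) := by linear_combination h0
        rw [this]
      rw [norm_mul, Complex.norm_real, Real.norm_eq_abs] at this
      have : ‖A‖ ≤ |c| * ‖A‖ :=
        this.trans_le (mul_le_mul_of_nonneg_left hzT (abs_nonneg c))
      nlinarith
    constructor
    · rw [thetaFun_succ, tildeFun_succ]
      exact mobius_ineq c (by nlinarith [abs_nonneg c, sq_abs c]) A (z * T) hzT
    · exact hne'

/-- reciprocal relation -/
lemma tilde_eq_pow_mul (ζ : ℕ → ℝ) (k : ℕ) (z : ℂ) (hz : z ≠ 0) :
    tildeFun ζ k z = z ^ k * thetaFun ζ k z⁻¹ := by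
  unfold tildeFun thetaFun
  rw [mul_sub, mul_one, Finset.mul_sum]
  congr 1
  refine Finset.sum_congr rfl fun i hi => ?_
  have hik : i < k := Finset.mem_range.mp hi
  rw [inv_pow, show k = (k - 1 - i) + (i + 1) by omega, pow_add]
  field_simp
  ring_nf
  rw [show 1 + (k - 1 - i) + i - 1 - i = k - 1 - i by omega]

/-- self-reciprocity at a level where ζ_j = ±1 -/
lemma self_recip (ζ : ℕ → ℝ) (m : ℕ) (hc : (ζ (m+1))^2 = 1) (z : ℂ) :
    thetaFun ζ (m+1) z = -(ζ (m+1) : ℂ) * tildeFun ζ (m+1) z := by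
  rw [thetaFun_succ, tildeFun_succ]
  have hC : ((ζ (m+1) : ℂ))^2 = 1 := by exact_mod_cast hc
  linear_combination (-(thetaFun ζ m z)) * hC

/-- the polynomial whose eval is thetaFun, has positive degree when ζ_j ≠ 0, j ≥ 1 -/
lemma exists_theta_root (ζ : ℕ → ℝ) (m : ℕ) (hne : ζ (m+1) ≠ 0) :
    ∃ w : ℂ, thetaFun ζ (m+1) w = 0 := by
  set j := m + 1
  set P : Polynomial ℂ :=
    Polynomial.C 1 - ∑ i ∈ Finset.range j,
      Polynomial.C ((fwdRow ζ j (i+1) : ℂ)) * Polynomial.X ^ (i+1) with hP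
  have heval : ∀ z, P.eval z = thetaFun ζ j z := by
    intro z
    simp [hP, thetaFun, Polynomial.eval_finset_sum]
  have hcoeff : P.coeff j = -(fwdRow ζ j j : ℂ) := by
    rw [hP]
    rw [Polynomial.coeff_sub, Polynomial.finset_sum_coeff]
    have h1 : (Polynomial.C (1:ℂ)).coeff j = 0 := by
      rw [Polynomial.coeff_C]; simp [j]
    rw [h1]
    rw [Finset.sum_eq_single (j - 1)]
    · simp [Polynomial.coeff_C_mul, Polynomial.coeff_X_pow, show j - 1 + 1 = j by omega]
    · intro i hi hne2
      have : i + 1 ≠ j := by omega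
      simp [Polynomial.coeff_C_mul, Polynomial.coeff_X_pow, this]
      intro h; exact absurd h.symm this
    · intro h
      exact absurd (Finset.mem_range.mpr (by omega)) h
  have hlast : fwdRow ζ j j = ζ j := by simp [fwdRow, j]
  have hc0 : P.coeff j ≠ 0 := by
    rw [hcoeff, hlast]
    simpa using hne
  have hdeg : 0 < P.degree := by
    calc (0 : WithBot ℕ) < (j : WithBot ℕ) := by exact_mod_cast Nat.succ_pos m
    _ ≤ P.degree := Polynomial.le_degree_of_ne_zero hc0
  obtain ⟨w, hw⟩ := Complex.exists_root hdeg
  exact ⟨w, by rw [← heval]; exact hw⟩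

/-- if ζ_{m+1} = ±1 then theta and tilde at level m+1 share a root in the closed disk -/
lemma exists_disk_root (ζ : ℕ → ℝ) (m : ℕ) (hc : |ζ (m+1)| = 1) :
    ∃ z : ℂ, ‖z‖ ≤ 1 ∧ thetaFun ζ (m+1) z = 0 ∧ tildeFun ζ (m+1) z = 0 := by
  have hc2 : (ζ (m+1))^2 = 1 := by nlinarith [sq_abs (ζ (m+1))]
  have hcne : ζ (m+1) ≠ 0 := by intro h; rw [h] at hc; simp at hc
  have hcC : ((ζ (m+1) : ℂ)) ≠ 0 := by exact_mod_cast hcne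
  obtain ⟨w, hw⟩ := exists_theta_root ζ m hcne
  have htilde : ∀ z, thetaFun ζ (m+1) z = 0 → tildeFun ζ (m+1) z = 0 := by
    intro z h
    have := self_recip ζ m hc2 z
    rw [h] at this
    rcases mul_eq_zero.mp this.symm with h' | h'
    · exact absurd (neg_eq_zero.mp h') hcC
    · exact h'
  by_cases hw1 : ‖w‖ ≤ 1
  · exact ⟨w, hw1, hw, htilde w hw⟩
  · push_neg at hw1
    have hw0 : w ≠ 0 := by
      intro h; rw [h, norm_zero] at hw1; linarith
    have ht : tildeFun ζ (m+1) w = 0 := htilde w hw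
    rw [tilde_eq_pow_mul ζ (m+1) w hw0] at ht
    have hth : thetaFun ζ (m+1) w⁻¹ = 0 := by
      rcases mul_eq_zero.mp ht with h' | h'
      · exact absurd h' (pow_ne_zero _ hw0)
      · exact h'
    refine ⟨w⁻¹, ?_, hth, htilde _ hth⟩
    rw [norm_inv]
    exact le_of_lt (by rw [inv_lt_one_iff₀]; right; exact hw1)

/-- roots propagate up the recursion -/
lemma root_propagate (ζ : ℕ → ℝ) (j : ℕ) (z : ℂ)
    (h1 : thetaFun ζ j z = 0) (h2 : tildeFun ζ j z = 0) :
    ∀ m, thetaFun ζ (j + m) z = 0 ∧ tildeFun ζ (j + m) z = 0 := by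
  intro m
  induction m with
  | zero => exact ⟨h1, h2⟩
  | succ m ih =>
    obtain ⟨ha, hb⟩ := ih
    rw [show j + (m+1) = (j + m) + 1 by omega, thetaFun_succ, tildeFun_succ, ha, hb]
    simp

section Assembly
variable {q : ℕ}
lemma continuous_toSeq_apply (n : ℕ) : Continuous (fun v : Fin q → ℝ => toSeq v n) := by
  by_cases h : n - 1 < q
  · simp only [toSeq, dif_pos h]
    exact continuous_apply _
  · simp only [toSeq, dif_neg h]
    exact continuous_const

lemma continuous_fwdRow : ∀ k i : ℕ, Continuous (fun v : Fin q → ℝ => fwdRow (toSeq v) k i) := by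
  intro k
  induction k with
  | zero => intro i; simpa [fwdRow] using continuous_const
  | succ k ih =>
    intro i
    by_cases h : i = k + 1
    · simp only [fwdRow, if_pos h]
      exact continuous_toSeq_apply (k+1)
    · simp only [fwdRow, if_neg h]
      exact (ih i).sub ((continuous_toSeq_apply (k+1)).mul (ih (k+1-i)))

lemma continuous_Bmap : Continuous (fun v : Fin q → ℝ => Bmap v) :=
  continuous_pi fun i => continuous_fwdRow q (i.1+1)

/-- bridge between the invRegion sum and thetaFun -/
lemma bridge (v : Fin q → ℝ) (z : ℂ) :
    1 - ∑ i : Fin q, (Bmap v i : ℂ) * z ^ (i.1 + 1) = thetaFun (toSeq v) q z := by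
  unfold thetaFun Bmap
  congr 1
  rw [Finset.sum_range fun i => (fwdRow (toSeq v) q (i+1) : ℂ) * z ^ (i+1)]

lemma mem_invRegion_of_abs_lt (v : Fin q → ℝ) (hv : ∀ i, |v i| < 1) :
    Bmap v ∈ invRegion q := by
  intro z hz
  rw [bridge] at hz
  by_contra h
  push_neg at h
  have hs : ∀ i, 1 ≤ i → i ≤ q → |toSeq v i| < 1 := by
    intro i h1 h2
    have hlt : i - 1 < q := by omega
    simp only [toSeq, dif_pos hlt]
    exact hv _
  exact ((schur (toSeq v) q hs z h).2) hz

lemma isOpen_openCube : IsOpen (openCube q) := by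
  have : openCube q = ⋂ i : Fin q, (fun v : Fin q → ℝ => v i) ⁻¹' Set.Ioo (-1) 1 := by
    ext v; simp [openCube, Set.mem_iInter]
  rw [this]
  exact isOpen_iInter_of_finite fun i => (isOpen_Ioo).preimage (continuous_apply i)

lemma closure_cube_subset :
    closure (openCube q) ⊆ {v : Fin q → ℝ | ∀ i, |v i| ≤ 1} := by
  apply closure_minimal
  · intro v hv i
    have := hv i
    rw [abs_le]
    exact ⟨le_of_lt this.1, le_of_lt this.2⟩
  · have : {v : Fin q → ℝ | ∀ i, |v i| ≤ 1}
        = ⋂ i : Fin q, (fun v : Fin q → ℝ => v i) ⁻¹' Set.Icc (-1) 1 := by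
      ext v; simp [Set.mem_iInter, abs_le, Set.mem_Icc]
    rw [this]
    exact isClosed_iInter fun i => (isClosed_Icc).preimage (continuous_apply i)


end Assembly

/-- For `q ≥ 1`, `B` carries the frontier of the open unit cube into the frontier of the
invertible region: `B(∂D_ζ) ⊆ ∂D_θ`. -/
theorem image_frontier_subset {q : ℕ} (hq : 1 ≤ q) :
    Bmap '' frontier (openCube q) ⊆ frontier (invRegion q) := by
  rintro θ ⟨ζ, hζ, rfl⟩
  have hcl : ζ ∈ closure (openCube q) := hζ.1
  have hbd : ∀ i, |ζ i| ≤ 1 := closure_cube_subset hcl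
  have hnotin : ζ ∉ openCube q := by
    intro h
    exact hζ.2 (by rwa [IsOpen.interior_eq isOpen_openCube])
  constructor
  · -- closure membership: approximate by t • ζ, t ↑ 1
    have htt : Filter.Tendsto (fun n : ℕ => (1 - 1/(n+1) : ℝ)) Filter.atTop (nhds 1) := by
      have := tendsto_one_div_add_atTop_nhds_zero_nat (𝕜 := ℝ)
      simpa using (tendsto_const_nhds (x := (1:ℝ)) (f := Filter.atTop)).sub this
    have hto : Filter.Tendsto (fun n : ℕ => Bmap ((1 - 1/(n+1) : ℝ) • ζ))
        Filter.atTop (nhds (Bmap ζ)) := by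
      have h1 : Filter.Tendsto (fun n : ℕ => ((1 - 1/(n+1) : ℝ) • ζ))
          Filter.atTop (nhds ζ) := by
        have := htt.smul (tendsto_const_nhds (x := ζ) (f := Filter.atTop))
        simpa using this
      exact (continuous_Bmap.tendsto ζ).comp h1
    refine mem_closure_of_tendsto hto (Filter.Eventually.of_forall fun n => ?_)
    apply mem_invRegion_of_abs_lt
    intro i
    have h0 : (0:ℝ) < 1/(n+1) := by positivity
    have h1 : 1/((n:ℝ)+1) ≤ 1 := by
      rw [div_le_one (by positivity)]; linarith [Nat.cast_nonneg (α := ℝ) n]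
    have : |(1 - 1/(n+1) : ℝ)| < 1 := by rw [abs_of_nonneg (by linarith)]; linarith
    calc |((1 - 1/(n+1) : ℝ) • ζ) i| = |(1 - 1/(n+1) : ℝ)| * |ζ i| := by
          simp [Pi.smul_apply, abs_mul]
    _ < 1 := by nlinarith [abs_nonneg (ζ i), this, abs_nonneg (1 - 1/((n:ℝ)+1)), hbd i]
  · -- not in interior: Bmap ζ has a root in the closed disk
    intro hint
    have hmem : Bmap ζ ∈ invRegion q := interior_subset hint
    obtain ⟨j0, hj0⟩ : ∃ j0 : Fin q, ¬ (ζ j0 ∈ Set.Ioo (-1:ℝ) 1) := by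
      by_contra h; push_neg at h; exact hnotin h
    have habs1 : |ζ j0| = 1 := by
      have := hbd j0
      rw [Set.mem_Ioo] at hj0
      push_neg at hj0
      rcases abs_le.mp this with ⟨ha, hb⟩
      rcases le_or_gt (ζ j0) (-1) with h | h
      · rw [abs_of_nonpos (by linarith)]; linarith
      · have h2 : 1 ≤ ζ j0 := hj0 h
        rw [abs_of_nonneg (by linarith)]; linarith
    -- level j = j0.1 + 1
    have hseq : |toSeq ζ (j0.1 + 1)| = 1 := by
      have hlt : j0.1 + 1 - 1 < q := by omega
      simp only [toSeq, dif_pos hlt]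
      exact habs1
    obtain ⟨z, hz1, hth, htl⟩ := exists_disk_root (toSeq ζ) j0.1 hseq
    have hprop := root_propagate (toSeq ζ) (j0.1 + 1) z hth htl (q - (j0.1 + 1))
    have hq' : j0.1 + 1 + (q - (j0.1 + 1)) = q := by omega
    rw [hq'] at hprop
    have : 1 < ‖z‖ := by
      apply hmem z
      rw [bridge]
      exact hprop.1
    linarith
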